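/- Consider the binary deterministic channel Y = (X ∨ Y'₁) ∧ Y'₂ on {0,1}. If a joint distribution P of (X, Y'₁, Y'₂) on {0,1}³ satisfies P_Y = P_{Y'₂} (where P_Y is the distribution of (X ∨ Y'₁) ∧ Y'₂ under P), then P(X=0, Y'₁=0, Y'₂=1) = 0, and consequently the conditional mutual information I(X; Y | Y'₁, Y'₂) = 0. -/

import Mathlib

open Finset

/-- Conditional mutual information `I(X ; Y | Y'₁, Y'₂)` of the joint distribution
`R y x y₁ y₂` on `(Y, X, (Y'₁, Y'₂))`, with the convention `0 · log(·) = 0`. -/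
noncomputable def condMI2 (R : Bool → Bool → Bool → Bool → ℝ) : ℝ :=
  ∑ y, ∑ x, ∑ y₁, ∑ y₂,
    R y x y₁ y₂ *
      Real.log (R y x y₁ y₂ * (∑ y', ∑ x', R y' x' y₁ y₂) /
        ((∑ y', R y' x y₁ y₂) * (∑ x', R y x' y₁ y₂)))

lemma aux_stmt17 (a s : ℝ) (h0 : 0 ≤ a) (hs : a ≤ s) :
    a * Real.log (a * s / (a * s)) = 0 := by
  rcases eq_or_lt_of_le h0 with h | h
  · simp [← h]
  · rw [div_self (ne_of_gt (mul_pos h (lt_of_lt_of_le h hs))), Real.log_one, mul_zero]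

theorem stmt17
    (P : Bool → Bool → Bool → ℝ)
    (hP0 : ∀ x y₁ y₂, 0 ≤ P x y₁ y₂)
    (hP1 : ∑ x, ∑ y₁, ∑ y₂, P x y₁ y₂ = 1)
    (hY2 : ∀ y, (∑ x, ∑ y₁, ∑ y₂,
        (if ((x || y₁) && y₂) = y then (1:ℝ) else 0) * P x y₁ y₂) =
      ∑ x, ∑ y₁, P x y₁ y) :
    P false false true = 0 ∧
    condMI2 (fun y x y₁ y₂ =>
      (if ((x || y₁) && y₂) = y then (1:ℝ) else 0) * P x y₁ y₂) = 0 := by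
  have h := hY2 true
  simp [Fintype.sum_bool] at h
  have hfft : P false false true = 0 := by linarith
  refine ⟨hfft, ?_⟩
  simp only [condMI2, Fintype.sum_bool]
  norm_num [hfft]
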